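/- Define ρ(Z) = |Z₁|² + |Z₂|² + |Z₃|² − 1 on ℂ³ and ρ'(z',w') = Im w' − (|z'₁|² + |z'₂|² + |z'₃|² − |z'₄|²) on ℂ⁵. Let H(Z) = (Z₁Z₂, Z₂², Z₂Z₃, Z₂, 0). Then ρ'(H(Z)) = −|Z₂|²·ρ(Z) for all Z ∈ ℂ³. In particular H maps the unit sphere {ρ = 0} into the hyperquadric {ρ' = 0}, and the differential of ρ' ∘ H vanishes at Z = 0. -/
import Mathlib


open ComplexConjugate

theorem stmt7_aux_mulzero {f g : ℂ × ℂ × ℂ → ℂ} {f' g' : (ℂ × ℂ × ℂ) →L[ℝ] ℂ}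
    (h1 : HasFDerivAt f f' 0) (h2 : HasFDerivAt g g' 0) (hf : f 0 = 0) (hg : g 0 = 0) :
    HasFDerivAt (fun Z => f Z * g Z) (0 : (ℂ × ℂ × ℂ) →L[ℝ] ℂ) 0 := by
  have h := HasFDerivAt.mul (𝕜 := ℝ) h1 h2
  rw [hf, hg] at h
  refine h.congr_fderiv ?_
  refine ContinuousLinearMap.ext fun v => ?_
  rw [ContinuousLinearMap.add_apply, ContinuousLinearMap.smul_apply,
    ContinuousLinearMap.smul_apply, zero_smul, zero_smul, add_zero,
    ContinuousLinearMap.zero_apply]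

/-- With `ρ(Z) = |Z₁|² + |Z₂|² + |Z₃|² - 1` and
`ρ'(z',w') = Im w' - (|z'₁|² + |z'₂|² + |z'₃|² - |z'₄|²)`, the map
`H(Z) = (Z₁Z₂, Z₂², Z₂Z₃, Z₂, 0)` satisfies `ρ' ∘ H = -|Z₂|² ρ`; in particular `H` maps
the unit sphere into the hyperquadric and `d(ρ' ∘ H)` vanishes at `0`. -/
theorem stmt7 :
    let ρ : ℂ × ℂ × ℂ → ℂ := fun Z =>
      Z.1 * conj Z.1 + Z.2.1 * conj Z.2.1 + Z.2.2 * conj Z.2.2 - 1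
    let ρ' : ℂ × ℂ × ℂ × ℂ × ℂ → ℂ := fun p =>
      (p.2.2.2.2 - conj p.2.2.2.2) / (2 * Complex.I)
        - (p.1 * conj p.1 + p.2.1 * conj p.2.1 + p.2.2.1 * conj p.2.2.1
            - p.2.2.2.1 * conj p.2.2.2.1)
    let H : ℂ × ℂ × ℂ → ℂ × ℂ × ℂ × ℂ × ℂ := fun Z =>
      (Z.1 * Z.2.1, Z.2.1 ^ 2, Z.2.1 * Z.2.2, Z.2.1, 0)
    (∀ Z, ρ' (H Z) = -(Z.2.1 * conj Z.2.1) * ρ Z) ∧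
    (∀ Z, ρ Z = 0 → ρ' (H Z) = 0) ∧
    fderiv ℝ (fun Z => ρ' (H Z)) 0 = 0 := by
  intro ρ ρ' H
  have key : ∀ Z, ρ' (H Z) = -(Z.2.1 * conj Z.2.1) * ρ Z := by
    intro Z
    simp only [ρ, ρ', H, map_mul, map_pow, map_zero, map_one]
    ring
  refine ⟨key, fun Z hZ => by rw [key Z, hZ, mul_zero], ?_⟩
  have hfun : (fun Z => ρ' (H Z)) = fun Z : ℂ × ℂ × ℂ => -(Z.2.1 * conj Z.2.1) * ρ Z :=
    funext key
  rw [hfun]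
  have hdconj : Differentiable ℝ (fun z : ℂ => conj z) := Complex.conjCLE.differentiable
  have d1 : DifferentiableAt ℝ (fun Z : ℂ × ℂ × ℂ => Z.1) 0 := differentiableAt_fst
  have d2 : DifferentiableAt ℝ (fun Z : ℂ × ℂ × ℂ => Z.2.1) 0 :=
    DifferentiableAt.comp _ differentiableAt_fst differentiableAt_snd
  have d3 : DifferentiableAt ℝ (fun Z : ℂ × ℂ × ℂ => Z.2.2) 0 :=
    DifferentiableAt.comp _ differentiableAt_snd differentiableAt_snd
  have hρ : DifferentiableAt ℝ ρ (0 : ℂ × ℂ × ℂ) :=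
    (((d1.mul (DifferentiableAt.comp _ (hdconj _) d1)).add
      (d2.mul (DifferentiableAt.comp _ (hdconj _) d2))).add
      (d3.mul (DifferentiableAt.comp _ (hdconj _) d3))).sub (differentiableAt_const 1)
  have hq : HasFDerivAt (fun Z : ℂ × ℂ × ℂ => Z.2.1 * conj Z.2.1)
      (0 : (ℂ × ℂ × ℂ) →L[ℝ] ℂ) 0 :=
    stmt7_aux_mulzero d2.hasFDerivAt
      (DifferentiableAt.comp _ (hdconj _) d2).hasFDerivAt (by simp) (by simp)
  have hmain : HasFDerivAt (fun Z : ℂ × ℂ × ℂ => -(Z.2.1 * conj Z.2.1) * ρ Z)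
      (0 : (ℂ × ℂ × ℂ) →L[ℝ] ℂ) 0 := by
    have hneg : HasFDerivAt (fun Z : ℂ × ℂ × ℂ => -(Z.2.1 * conj Z.2.1))
        (0 : (ℂ × ℂ × ℂ) →L[ℝ] ℂ) 0 := by
      have := hq.neg
      rwa [neg_zero] at this
    have h := HasFDerivAt.mul (𝕜 := ℝ) hneg hρ.hasFDerivAt
    have hv : -((0 : ℂ × ℂ × ℂ).2.1 * conj (0 : ℂ × ℂ × ℂ).2.1) = (0 : ℂ) := by simp
    rw [hv] at h
    refine h.congr_fderiv ?_
    refine ContinuousLinearMap.ext fun v => ?_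
    rw [ContinuousLinearMap.add_apply, ContinuousLinearMap.smul_apply,
      ContinuousLinearMap.smul_apply, ContinuousLinearMap.zero_apply, smul_zero, add_zero,
      zero_smul]
  exact hmain.fderiv
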